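/- Weighted-sum multi-task bound (conclusion of Step 1 of the proof of Theorem 1): Let H be a nonempty family of bounded measurable K-Lipschitz functions X → ℝ with K > 0, let D^1, …, D^T be Borel probability measures on the metric space X with bounded measurable ground-truth labeling functions f_1, …, f_T : X → ℝ, and write L_j(h) = L_{D^j}(h, f_j) and ξ_{t,i} = inf_{h ∈ H} (L_t(h) + L_i(h)). Let λ ∈ Δ_T, and for each task t let α_t ∈ Δ_T, let h_t ∈ H, and for each pair (t, i) let W_{t,i} be a dual Wasserstein bound for (D^i, D^t). Then Σ_{t=1}^T λ_t L_t(h_t) ≤ Σ_{t=1}^T λ_t Σ_{i=1}^T α_{t,i} L_i(h_t) + Σ_{t=1}^T λ_t Σ_{i=1}^T α_{t,i} ξ_{t,i} + 2K Σ_{t=1}^T λ_t Σ_{i=1}^T α_{t,i} W_{t,i}. -/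

import Mathlib

open MeasureTheory

/-- Expected loss `L_μ(u, v) = ∫ |u(x) − v(x)| dμ(x)`. -/
noncomputable def expLoss {X : Type*} [MeasurableSpace X] (μ : Measure X)
    (u v : X → ℝ) : ℝ :=
  ∫ x, |u x - v x| ∂μ

/-- A function is bounded if its absolute values are uniformly bounded. -/
def BoundedFun {X : Type*} (g : X → ℝ) : Prop := ∃ C : ℝ, ∀ x, |g x| ≤ C

/-- `g : X → ℝ` is `K`-Lipschitz if `|g(x) − g(y)| ≤ K · d(x, y)` for all `x, y`. -/
def LipschitzCoef {X : Type*} [MetricSpace X] (K : ℝ) (g : X → ℝ) : Prop :=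
  ∀ x y, |g x - g y| ≤ K * dist x y

/-- `W` is a dual Wasserstein bound for `(μ, ν)` if `|∫ f dμ − ∫ f dν| ≤ W`
for every bounded 1-Lipschitz `f : X → ℝ`. -/
def DualWassersteinBound {X : Type*} [MetricSpace X] [MeasurableSpace X]
    (μ ν : Measure X) (W : ℝ) : Prop :=
  ∀ f : X → ℝ, BoundedFun f → LipschitzCoef 1 f →
    |(∫ x, f x ∂μ) - ∫ x, f x ∂ν| ≤ W

lemma integrable_abs_sub' {X : Type*} [MeasurableSpace X] (μ : Measure X)
    [IsFiniteMeasure μ] {u v : X → ℝ}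
    (hub : BoundedFun u) (hvb : BoundedFun v)
    (hum : Measurable u) (hvm : Measurable v) :
    Integrable (fun x => |u x - v x|) μ := by
  obtain ⟨Cu, hCu⟩ := hub
  obtain ⟨Cv, hCv⟩ := hvb
  refine ⟨((hum.sub hvm).abs).aestronglyMeasurable, ?_⟩
  apply MeasureTheory.HasFiniteIntegral.of_bounded (C := Cu + Cv)
  filter_upwards with x
  simp only [Real.norm_eq_abs, abs_abs]
  have h1 := abs_add_le (u x) (-(v x))
  rw [abs_neg] at h1
  rw [sub_eq_add_neg]
  linarith [hCu x, hCv x]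

/-- Weighted-sum multi-task bound (conclusion of Step 1 of the proof of Theorem 1):
`Σ_t λ_t L_t(h_t) ≤ Σ_t λ_t Σ_i α_{t,i} L_i(h_t) + Σ_t λ_t Σ_i α_{t,i} ξ_{t,i}
 + 2K Σ_t λ_t Σ_i α_{t,i} W_{t,i}`, where `ξ_{t,i} = inf_{g ∈ H} (L_t(g) + L_i(g))`. -/
theorem weighted_sum_multitask_bound
    {X : Type*} [MetricSpace X] [MeasurableSpace X] [BorelSpace X]
    (K : ℝ) (hK : 0 < K)
    (H : Set (X → ℝ)) (hHne : H.Nonempty)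
    (hHb : ∀ g ∈ H, BoundedFun g)
    (hHm : ∀ g ∈ H, Measurable g)
    (hHl : ∀ g ∈ H, LipschitzCoef K g)
    (T : ℕ)
    (D : Fin T → Measure X) (hD : ∀ j, IsProbabilityMeasure (D j))
    (f : Fin T → X → ℝ)
    (hfb : ∀ j, BoundedFun (f j)) (hfm : ∀ j, Measurable (f j))
    (lam : Fin T → ℝ) (hlam0 : ∀ t, 0 ≤ lam t) (hlam1 : ∑ t, lam t = 1)
    (α : Fin T → Fin T → ℝ) (hα0 : ∀ t i, 0 ≤ α t i) (hα1 : ∀ t, ∑ i, α t i = 1)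
    (h : Fin T → X → ℝ) (hh : ∀ t, h t ∈ H)
    (W : Fin T → Fin T → ℝ)
    (hW : ∀ t i, DualWassersteinBound (D i) (D t) (W t i)) :
    ∑ t, lam t * expLoss (D t) (h t) (f t) ≤
      (∑ t, lam t * ∑ i, α t i * expLoss (D i) (h t) (f i))
      + (∑ t, lam t * ∑ i, α t i * (⨅ g : H, (expLoss (D t) (g : X → ℝ) (f t)
            + expLoss (D i) (g : X → ℝ) (f i))))
      + 2 * K * ∑ t, lam t * ∑ i, α t i * W t i := by
  haveI := hHne.to_subtype
  haveI := fun j => hD j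
  -- key pairwise bound
  have key : ∀ t i, expLoss (D t) (h t) (f t) ≤
      expLoss (D i) (h t) (f i)
      + (⨅ g : H, (expLoss (D t) (g : X → ℝ) (f t) + expLoss (D i) (g : X → ℝ) (f i)))
      + 2 * K * W t i := by
    intro t i
    have step : ∀ g : H, expLoss (D t) (h t) (f t) ≤
        expLoss (D i) (h t) (f i)
        + (expLoss (D t) (g : X → ℝ) (f t) + expLoss (D i) (g : X → ℝ) (f i))
        + 2 * K * W t i := by
      rintro ⟨g, hg⟩
      simp only
      set ht := h t with hht
      have hhtH := hh t
      -- Wasserstein step on |h t - g|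
      have lip : ∀ x y, abs (|ht x - g x| - |ht y - g y|) ≤ 2 * K * dist x y := by
        intro x y
        have h1 := hHl _ hhtH x y
        have h2 := hHl _ hg x y
        have h3 : abs (|ht x - g x| - |ht y - g y|) ≤ |(ht x - g x) - (ht y - g y)| :=
          abs_abs_sub_abs_le_abs_sub _ _
        have h4 : |(ht x - g x) - (ht y - g y)| ≤ |ht x - ht y| + |g x - g y| := by
          have := abs_sub (ht x - ht y) (g x - g y)
          have e : (ht x - g x) - (ht y - g y) = (ht x - ht y) - (g x - g y) := by ring
          rw [e]
          exact abs_sub _ _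
        linarith
      obtain ⟨Ch, hCh⟩ := hHb _ hhtH
      obtain ⟨Cg, hCg⟩ := hHb _ hg
      have hphi := hW t i (fun x => |ht x - g x| * (2 * K)⁻¹)
        ⟨(Ch + Cg) * (2 * K)⁻¹, by
          intro x
          rw [abs_mul, abs_abs, abs_of_nonneg (by positivity : (0:ℝ) ≤ (2*K)⁻¹)]
          apply mul_le_mul_of_nonneg_right _ (by positivity)
          have := abs_sub (ht x) (g x)
          calc |ht x - g x| ≤ |ht x| + |g x| := by
                have h1 := abs_add_le (ht x) (-(g x))
                rw [abs_neg] at h1; rw [sub_eq_add_neg]; exact h1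
            _ ≤ Ch + Cg := add_le_add (hCh x) (hCg x)⟩
        (by
          intro x y
          rw [← sub_mul, abs_mul, abs_of_nonneg (by positivity : (0:ℝ) ≤ (2*K)⁻¹)]
          rw [one_mul]
          calc abs (|ht x - g x| - |ht y - g y|) * (2*K)⁻¹ ≤ (2*K*dist x y) * (2*K)⁻¹ :=
                mul_le_mul_of_nonneg_right (lip x y) (by positivity)
            _ = dist x y := by field_simp)
      rw [integral_mul_const, integral_mul_const, ← sub_mul, abs_mul,
        abs_of_nonneg (by positivity : (0:ℝ) ≤ (2*K)⁻¹)] at hphi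
      have hW2 : (∫ x, |ht x - g x| ∂(D t)) ≤ (∫ x, |ht x - g x| ∂(D i)) + 2 * K * W t i := by
        have h2K : (0:ℝ) < 2 * K := by positivity
        have habs : |(∫ x, |ht x - g x| ∂(D i)) - ∫ x, |ht x - g x| ∂(D t)| ≤ 2 * K * W t i := by
          calc |(∫ x, |ht x - g x| ∂(D i)) - ∫ x, |ht x - g x| ∂(D t)|
              = |(∫ x, |ht x - g x| ∂(D i)) - ∫ x, |ht x - g x| ∂(D t)| * (2*K)⁻¹ * (2*K) := by
                field_simp
            _ ≤ W t i * (2*K) := mul_le_mul_of_nonneg_right hphi h2K.le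
            _ = 2 * K * W t i := by ring
        have := abs_le.mp habs
        linarith [this.1]
      -- integrability
      have Iht_ft := integrable_abs_sub' (D t) (hHb _ hhtH) (hfb t) (hHm _ hhtH) (hfm t)
      have Iht_g_t := integrable_abs_sub' (D t) (hHb _ hhtH) (hHb _ hg) (hHm _ hhtH) (hHm _ hg)
      have Ig_ft := integrable_abs_sub' (D t) (hHb _ hg) (hfb t) (hHm _ hg) (hfm t)
      have Iht_g_i := integrable_abs_sub' (D i) (hHb _ hhtH) (hHb _ hg) (hHm _ hhtH) (hHm _ hg)
      have Iht_fi := integrable_abs_sub' (D i) (hHb _ hhtH) (hfb i) (hHm _ hhtH) (hfm i)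
      have Ig_fi := integrable_abs_sub' (D i) (hHb _ hg) (hfb i) (hHm _ hg) (hfm i)
      have tri1 : expLoss (D t) ht (f t) ≤
          (∫ x, |ht x - g x| ∂(D t)) + expLoss (D t) g (f t) := by
        rw [expLoss, expLoss, ← integral_add Iht_g_t Ig_ft]
        apply integral_mono Iht_ft (Iht_g_t.add Ig_ft)
        intro x
        have := abs_add_le (ht x - g x) (g x - f t x)
        simpa using this.trans_eq' (by congr 1; ring)
      have tri2 : (∫ x, |ht x - g x| ∂(D i)) ≤
          expLoss (D i) ht (f i) + expLoss (D i) g (f i) := by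
        rw [expLoss, expLoss, ← integral_add Iht_fi Ig_fi]
        apply integral_mono Iht_g_i (Iht_fi.add Ig_fi)
        intro x
        have := abs_add_le (ht x - f i x) (f i x - g x)
        have e : |f i x - g x| = |g x - f i x| := abs_sub_comm _ _
        rw [e] at this
        exact this.trans_eq' (by congr 1; ring)
      linarith
    have hbdd : ∀ g : H, (0:ℝ) ≤ expLoss (D t) (g : X → ℝ) (f t)
        + expLoss (D i) (g : X → ℝ) (f i) := fun g =>
      add_nonneg (integral_nonneg fun x => abs_nonneg _) (integral_nonneg fun x => abs_nonneg _)
    have hiInf : expLoss (D t) (h t) (f t) - expLoss (D i) (h t) (f i) - 2 * K * W t i ≤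
        ⨅ g : H, (expLoss (D t) (g : X → ℝ) (f t) + expLoss (D i) (g : X → ℝ) (f i)) := by
      apply le_ciInf
      intro g
      linarith [step g]
    linarith
  -- combine
  calc ∑ t, lam t * expLoss (D t) (h t) (f t)
      = ∑ t, lam t * ∑ i, α t i * expLoss (D t) (h t) (f t) := by
        refine Finset.sum_congr rfl fun t _ => ?_
        rw [← Finset.sum_mul, hα1, one_mul]
    _ ≤ ∑ t, lam t * ∑ i, α t i * (expLoss (D i) (h t) (f i)
          + (⨅ g : H, (expLoss (D t) (g : X → ℝ) (f t) + expLoss (D i) (g : X → ℝ) (f i)))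
          + 2 * K * W t i) := by
        refine Finset.sum_le_sum fun t _ => ?_
        refine mul_le_mul_of_nonneg_left (Finset.sum_le_sum fun i _ => ?_) (hlam0 t)
        exact mul_le_mul_of_nonneg_left (key t i) (hα0 t i)
    _ = _ := by
        simp only [mul_add, Finset.sum_add_distrib, Finset.mul_sum]
        congr 1
        refine Finset.sum_congr rfl fun t _ => Finset.sum_congr rfl fun i _ => by ring
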